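/- Let K be a field of characteristic 0, let g ∈ K[X] be a monic polynomial of degree n ≥ 1 and set f(X) = g(X²), a monic polynomial of degree 2n. Then disc(f) = (−1)ⁿ · 4ⁿ · g(0) · disc(g)², where disc denotes the discriminant of a monic polynomial (the product of (r_i − r_j)² over all unordered pairs of roots r_i, r_j in an algebraic closure, counted with multiplicity). -/

import Mathlib

open Polynomial

/-- `∏_{i<j} (l_i - l_j)²` over the entries of a list. -/
noncomputable def pairSquareProd {F : Type*} [Field F] (l : List F) : F :=
  ∏ q ∈ Finset.univ.filter (fun q : Fin l.length × Fin l.length => q.1 < q.2),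
    (l.get q.1 - l.get q.2) ^ 2

/-- The discriminant of a polynomial over an algebraically closed field:
the product of `(r_i - r_j)²` over all unordered pairs of its roots
(counted with multiplicity). -/
noncomputable def discOf {F : Type*} [Field F] (p : F[X]) : F :=
  pairSquareProd p.roots.toList

open Finset

section Aux

variable {A : Type*} [Field A]

lemma pairSquareProd_eq_sign_mul (l : List A) :
    pairSquareProd l = (-1:A)^(l.length*(l.length-1)/2) *
      ∏ q ∈ Finset.univ.filter (fun q : Fin l.length × Fin l.length => q.1 ≠ q.2),
        (l.get q.1 - l.get q.2) := by
  classical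
  have hunion : (Finset.univ.filter (fun q : Fin l.length × Fin l.length => q.1 ≠ q.2)) =
      (Finset.univ.filter (fun q : Fin l.length × Fin l.length => q.1 < q.2)) ∪
      (Finset.univ.filter (fun q : Fin l.length × Fin l.length => q.2 < q.1)) := by
    ext q
    simp only [mem_filter, mem_union, mem_univ, true_and]
    exact ne_iff_lt_or_gt
  have hdisj : Disjoint (Finset.univ.filter (fun q : Fin l.length × Fin l.length => q.1 < q.2))
      (Finset.univ.filter (fun q : Fin l.length × Fin l.length => q.2 < q.1)) := by
    rw [Finset.disjoint_left]
    intro q h1 h2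
    simp only [mem_filter] at h1 h2
    exact absurd (h1.2.trans h2.2) (lt_irrefl _)
  have hgt : ∏ q ∈ Finset.univ.filter (fun q : Fin l.length × Fin l.length => q.2 < q.1),
        (l.get q.1 - l.get q.2) =
      ∏ q ∈ Finset.univ.filter (fun q : Fin l.length × Fin l.length => q.1 < q.2),
        (l.get q.2 - l.get q.1) := by
    refine Finset.prod_nbij' (fun q => (q.2, q.1)) (fun q => (q.2, q.1)) ?_ ?_ ?_ ?_ ?_ <;>
      intro q hq <;> simp_all
  have hcard2 : (Finset.univ.filter (fun q : Fin l.length × Fin l.length => q.1 < q.2)).card =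
      (Finset.univ.filter (fun q : Fin l.length × Fin l.length => q.2 < q.1)).card := by
    apply Finset.card_nbij' (fun q => (q.2, q.1)) (fun q => (q.2, q.1)) <;>
      intro q hq <;> simp_all
  have hcard : (Finset.univ.filter (fun q : Fin l.length × Fin l.length => q.1 < q.2)).card +
      (Finset.univ.filter (fun q : Fin l.length × Fin l.length => q.2 < q.1)).card =
      l.length * l.length - l.length := by
    rw [← Finset.card_union_of_disjoint hdisj, ← hunion]
    have : (Finset.univ.filter (fun q : Fin l.length × Fin l.length => q.1 ≠ q.2)) =
        (Finset.univ : Finset (Fin l.length)).offDiag := by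
      ext q; simp [Finset.mem_offDiag]
    rw [this, Finset.offDiag_card]
    simp
  have hc : (Finset.univ.filter (fun q : Fin l.length × Fin l.length => q.1 < q.2)).card =
      l.length * (l.length - 1)/2 := by
    have hm : l.length * l.length - l.length = l.length * (l.length - 1) := by
      cases l.length with
      | zero => simp
      | succ k => simp [Nat.succ_sub_one, Nat.mul_succ]
    omega
  have key : ∏ q ∈ Finset.univ.filter (fun q : Fin l.length × Fin l.length => q.1 ≠ q.2),
      (l.get q.1 - l.get q.2) = (-1:A)^(l.length*(l.length-1)/2) * pairSquareProd l := by
    rw [hunion, Finset.prod_union hdisj, hgt, ← Finset.prod_mul_distrib]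
    have h2 : ∀ q ∈ Finset.univ.filter (fun q : Fin l.length × Fin l.length => q.1 < q.2),
        (l.get q.1 - l.get q.2) * (l.get q.2 - l.get q.1) =
        (-1) * (l.get q.1 - l.get q.2)^2 := by intro q _; ring
    rw [Finset.prod_congr rfl h2, Finset.prod_mul_distrib, Finset.prod_const, hc,
      pairSquareProd]
  rw [key, ← mul_assoc, ← pow_add]
  have : Even (l.length*(l.length-1)/2 + l.length*(l.length-1)/2) := ⟨_, rfl⟩
  rw [this.neg_one_pow, one_mul]

lemma eval_derivative_prod_sub {ι : Type*} [DecidableEq ι] (s : Finset ι) (r : ι → A)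
    (i : ι) (hi : i ∈ s) :
    (derivative (∏ j ∈ s, (X - C (r j)))).eval (r i) = ∏ j ∈ s.erase i, (r i - r j) := by
  classical
  have hd : derivative (∏ j ∈ s, (X - C (r j))) =
      ∑ k ∈ s, (∏ j ∈ s.erase k, (X - C (r j))) * derivative (X - C (r k)) := by
    rw [Finset.prod_eq_multiset_prod, derivative_prod, Finset.sum_eq_multiset_sum]
    exact congrArg Multiset.sum (Multiset.map_congr rfl fun k hk => by
      rw [← Finset.erase_val s, ← Finset.prod_eq_multiset_prod])
  rw [hd, eval_finset_sum]
  rw [Finset.sum_eq_single_of_mem i hi]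
  · simp [eval_prod]
  · intro k hk hki
    rw [eval_mul, eval_prod]
    apply mul_eq_zero_of_left
    apply Finset.prod_eq_zero (i := i) (Finset.mem_erase.2 ⟨fun h => hki h.symm, hi⟩)
    simp

lemma prod_ne_eq_prod_eval_derivative (l : List A) :
    (∏ q ∈ Finset.univ.filter (fun q : Fin l.length × Fin l.length => q.1 ≠ q.2),
      (l.get q.1 - l.get q.2)) =
    ∏ i : Fin l.length,
      (derivative (∏ j : Fin l.length, (X - C (l.get j)))).eval (l.get i) := by
  classical
  have step1 : (∏ q ∈ Finset.univ.filter (fun q : Fin l.length × Fin l.length => q.1 ≠ q.2),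
      (l.get q.1 - l.get q.2)) =
      ∏ i : Fin l.length, ∏ j ∈ Finset.univ.erase i, (l.get i - l.get j) := by
    rw [Finset.prod_filter, ← Finset.univ_product_univ, Finset.prod_product]
    apply Finset.prod_congr rfl
    intro i _
    rw [← Finset.prod_filter, Finset.filter_ne]
  rw [step1]
  apply Finset.prod_congr rfl
  intro i _
  exact (eval_derivative_prod_sub Finset.univ l.get i (Finset.mem_univ i)).symm

lemma list_fin_prod_eq {M : Type*} [CommMonoid M] (l : List A) (f : A → M) :
    (∏ i : Fin l.length, f (l.get i)) = (l.map f).prod := by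
  rw [← List.ofFn_getElem_eq_map, List.prod_ofFn]
  rfl

lemma discOf_eq (p : A[X]) (hp : p.Monic) (hs : Splits p) :
    discOf p = (-1:A)^(p.roots.card*(p.roots.card-1)/2) *
      (p.roots.map (fun a => p.derivative.eval a)).prod := by
  have hl : (p.roots.toList : Multiset A) = p.roots := p.roots.coe_toList
  have hlen : p.roots.toList.length = p.roots.card := p.roots.length_toList
  have hprod : (∏ j : Fin p.roots.toList.length, (X - C (p.roots.toList.get j))) = p := by
    rw [list_fin_prod_eq _ (fun a => X - C a)]
    conv_rhs => rw [hs.eq_prod_roots_of_monic hp]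
    rw [← Multiset.prod_coe, ← Multiset.map_coe, hl]
  rw [discOf, pairSquareProd_eq_sign_mul, prod_ne_eq_prod_eval_derivative, hprod,
    list_fin_prod_eq _ (fun a => (derivative p).eval a), hlen,
    ← Multiset.prod_coe, ← Multiset.map_coe, hl]

end Aux

/-- If `g` is monic of degree `n ≥ 1` over a field `K` of characteristic zero and
`f(X) = g(X²)`, then `disc(f) = (-1)ⁿ · 4ⁿ · g(0) · disc(g)²` (computed via the
roots in an algebraic closure of `K`). -/
theorem disc_comp_X_sq
    (K : Type*) [Field K] [CharZero K] (g : K[X]) (hg : g.Monic)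
    (n : ℕ) (hn : 1 ≤ n) (hdeg : g.natDegree = n) :
    discOf ((g.comp (Polynomial.X ^ 2)).map (algebraMap K (AlgebraicClosure K))) =
      (-1) ^ n * 4 ^ n * (algebraMap K (AlgebraicClosure K) (g.eval 0)) *
        (discOf (g.map (algebraMap K (AlgebraicClosure K)))) ^ 2 := by
  classical
  set A := AlgebraicClosure K
  set φ := algebraMap K A with hφ
  set G := g.map φ with hGdef
  have hGmonic : G.Monic := hg.map φ
  have hGdeg : G.natDegree = n := by rw [hGdef, hg.natDegree_map, hdeg]
  have hFeq : (g.comp (X ^ 2)).map φ = G.comp (X ^ 2) := by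
    rw [Polynomial.map_comp]; simp; rfl
  set F := G.comp (X ^ 2) with hFdef
  have hFmonic : F.Monic := by
    apply hGmonic.comp (monic_X_pow 2)
    simp [natDegree_X_pow]
  have hFdeg : F.natDegree = 2 * n := by
    rw [hFdef, natDegree_comp, hGdeg, natDegree_X_pow]; ring
  have hGcard : G.roots.card = n := by
    rw [splits_iff_card_roots.1 (IsAlgClosed.splits G), hGdeg]
  have hFcard : F.roots.card = 2 * n := by
    rw [splits_iff_card_roots.1 (IsAlgClosed.splits F), hFdeg]
  choose s hs using fun a : A => IsAlgClosed.exists_pow_nat_eq a (n := 2) two_pos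
  have hGfact : G = (G.roots.map fun a => X - C a).prod :=
    (IsAlgClosed.splits G).eq_prod_roots_of_monic hGmonic
  have hFfact : F = (G.roots.map fun a => (X - C (s a)) * (X + C (s a))).prod := by
    conv_lhs => rw [hFdef]
    conv_lhs => rw [hGfact]
    rw [multiset_prod_comp, Multiset.map_map]
    congr 1
    apply Multiset.map_congr rfl
    intro a _
    simp only [Function.comp_apply, sub_comp, X_comp, C_comp]
    rw [show (X - C (s a)) * (X + C (s a)) = X^2 - C (s a ^ 2) by rw [map_pow]; ring, hs a]
  have hne : ∀ a : A, (X - C (s a)) * (X + C (s a)) ≠ 0 := fun a =>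
    ((monic_X_sub_C (s a)).mul (monic_X_add_C (s a))).ne_zero
  have hFroots : F.roots = G.roots.bind fun a => {s a, -(s a)} := by
    rw [hFfact, roots_multiset_prod, Multiset.bind_map]
    · apply Multiset.bind_congr
      intro a _
      rw [roots_mul (hne a), roots_X_sub_C,
        show (X + C (s a)) = X - C (-(s a)) by rw [map_neg, sub_neg_eq_add], roots_X_sub_C]
      rfl
    · intro h0
      rcases Multiset.mem_map.1 h0 with ⟨a, _, ha⟩
      exact hne a ha
  have hFeval : ∀ r : A, F.derivative.eval r = 2 * r * G.derivative.eval (r ^ 2) := by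
    intro r
    rw [hFdef, derivative_comp]
    simp [eval_comp]
    try ring
    norm_num
  have hGev0 : G.eval 0 = φ (g.eval 0) := by rw [hGdef, eval_zero_map]
  have hG0 : G.roots.prod = (-1:A)^n * φ (g.eval 0) := by
    have h1 : G.eval 0 = (-1:A)^n * G.roots.prod := by
      conv_lhs => rw [hGfact]
      rw [eval_multiset_prod, Multiset.map_map]
      have : ∀ a ∈ G.roots, (eval 0 ∘ fun a => X - C a) a = -a := by
        intro a _; simp
      rw [Multiset.map_congr rfl this, Multiset.prod_map_neg, hGcard]
    have hsq : ((-1:A)^n)*((-1:A)^n) = 1 := by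
      rw [← pow_add]
      exact Even.neg_one_pow ⟨n, rfl⟩
    rw [← hGev0, h1, ← mul_assoc, hsq, one_mul]
  have hPF : (F.roots.map fun r => F.derivative.eval r).prod =
      (-4 : A)^n * ((-1:A)^n * φ (g.eval 0)) *
        ((G.roots.map fun a => G.derivative.eval a).prod)^2 := by
    rw [hFroots, Multiset.map_bind, Multiset.prod_bind]
    have : ∀ a ∈ G.roots, (({s a, -(s a)} : Multiset A).map
        fun r => F.derivative.eval r).prod = (-4) * (a * (G.derivative.eval a)^2) := by
      intro a _
      simp only [Multiset.insert_eq_cons, Multiset.map_cons, Multiset.map_singleton,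
        Multiset.prod_cons, Multiset.prod_singleton]
      rw [hFeval, hFeval, hs a, neg_pow, hs a]
      rw [show ((-1:A))^2 * a = a by ring]
      linear_combination (-4 * (G.derivative.eval a)^2) * hs a
    rw [Multiset.map_congr rfl this]
    rw [show (fun a : A => (-4:A) * (a * (G.derivative.eval a)^2)) =
      (fun a : A => ((-4:A) : A) * ((fun b : A => b * (G.derivative.eval b)^2) a)) from rfl]
    rw [Multiset.prod_map_mul (f := fun _ : A => (-4:A))
      (g := fun b : A => b * (G.derivative.eval b)^2)]
    rw [Multiset.map_const', Multiset.prod_replicate, hGcard]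
    rw [Multiset.prod_map_mul (f := fun b : A => b) (g := fun b : A => (G.derivative.eval b)^2)]
    rw [Multiset.prod_map_pow (f := fun b : A => G.derivative.eval b) (n := 2)]
    have : (G.roots.map fun b : A => b) = G.roots := Multiset.map_id _
    rw [this, hG0]
    ring
  -- assemble
  rw [hFeq, discOf_eq F hFmonic (IsAlgClosed.splits F),
    discOf_eq G hGmonic (IsAlgClosed.splits G), hPF, hFcard, hGcard]
  have hexp : 2 * n * (2 * n - 1) / 2 = n * (2 * n - 1) := by
    have h2 : 2 * n * (2 * n - 1) = 2 * (n * (2 * n - 1)) := by ring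
    omega
  rw [hexp]
  have hsign : ((-1:A)^(n * (2*n-1))) = (-1:A)^n := by
    rcases Nat.even_or_odd n with he | ho
    · rw [he.neg_one_pow, (he.mul_right _).neg_one_pow]
    · rw [ho.neg_one_pow, ((ho.mul (⟨n-1, by omega⟩ : Odd (2*n-1)))).neg_one_pow]
  rw [hsign]
  have hsq : ∀ k : ℕ, ((-1:A)^k)*((-1:A)^k) = 1 := by
    intro k; rw [← pow_add]; exact Even.neg_one_pow ⟨k, rfl⟩
  rw [mul_pow, ← pow_mul]
  have h1 : ((-1:A)^(n*(n-1)/2*2)) = 1 := Even.neg_one_pow ⟨n*(n-1)/2, by ring⟩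
  rw [h1, one_mul, neg_pow 4 n]
  have h3 : ((-1:A)^n) * ((-1:A)^n) * ((-1:A)^n) = (-1:A)^n := by
    rw [hsq n, one_mul]
  have h4 : ((-1:A)^(n*3)) = (-1:A)^n := by
    rw [show n*3 = n+n+n from by ring, pow_add, pow_add, hsq n, one_mul]
  ring_nf
  linear_combination (4 ^ n * φ (eval 0 g) * (Multiset.map (fun a => eval a (derivative G)) G.roots).prod ^ 2) * h3
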